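/- For every c ∈ (0,1), the equation c·x − 1 + (x + 1)·exp(−x·(1+c)) = 0 has exactly one solution x₀ in (0, ∞), and x₀ < 1/c. Moreover, for any sequences (β₁ⁿ), (β₂ⁿ) with 0 < β₁ⁿ < β₂ⁿ, β₁ⁿ/β₂ⁿ → c and β₂ⁿ → 0, letting aⁿ be the unique positive zero of F_{β₁ⁿ,β₂ⁿ}, one has aⁿ·β₂ⁿ → x₀, and hence aⁿ·β₁ⁿ → c·x₀ ∈ (0,1). -/

import Mathlib

/-- Hamilton football angle function: `F β₁ β₂ x = β₁x − 1 + (β₂x + 1) e^{−x(β₁+β₂)}`. -/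
noncomputable def F (β₁ β₂ x : ℝ) : ℝ :=
  β₁ * x - 1 + (β₂ * x + 1) * Real.exp (-x * (β₁ + β₂))

/-- The rescaled function `g c x = cx − 1 + (x+1)e^{−x(1+c)}`. -/
noncomputable def g (c x : ℝ) : ℝ := c * x - 1 + (x + 1) * Real.exp (-x * (1 + c))

/-- Its derivative in `x`. -/
noncomputable def g1 (c x : ℝ) : ℝ := c - Real.exp (-x * (1 + c)) * (c + (1 + c) * x)

lemma hasDerivAt_g (c x : ℝ) : HasDerivAt (g c) (g1 c x) x := by
  have h1 : HasDerivAt (fun y : ℝ => -y * (1 + c)) (-1 * (1 + c)) x :=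
    (hasDerivAt_id x).neg.mul_const (1 + c)
  have h2 := h1.exp
  have h3 := ((hasDerivAt_id x).add_const 1).mul h2
  have h4 : HasDerivAt (fun y : ℝ => c * y - 1) c x := by
    simpa using ((hasDerivAt_id x).const_mul c).sub_const 1
  have h5 := h4.add h3
  refine h5.congr_deriv ?_
  simp only [g1, id_eq]
  ring

lemma hasDerivAt_g1 (c x : ℝ) :
    HasDerivAt (g1 c) ((1 + c) * Real.exp (-x * (1 + c)) * ((1 + c) * x - (1 - c))) x := by
  have h1 : HasDerivAt (fun y : ℝ => -y * (1 + c)) (-1 * (1 + c)) x :=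
    (hasDerivAt_id x).neg.mul_const (1 + c)
  have h2 := h1.exp
  have h3 : HasDerivAt (fun y : ℝ => c + (1 + c) * y) (1 + c) x := by
    simpa using ((hasDerivAt_id x).const_mul (1 + c)).const_add c
  have h4 := (h2.mul h3).const_sub c
  refine h4.congr_deriv ?_
  ring

lemma continuous_g (c : ℝ) : Continuous (g c) := by
  unfold g; continuity

lemma continuous_g1 (c : ℝ) : Continuous (g1 c) := by
  unfold g1; continuity

/-- Structure: `g c` is negative on `(0, xs]` and strictly increasing on `[xs, ∞)`. -/
lemma structure_lemma {c : ℝ} (hc0 : 0 < c) (hc1 : c < 1) :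
    ∃ xs : ℝ, 0 < xs ∧ (∀ t, 0 < t → t ≤ xs → g c t < 0) ∧
      StrictMonoOn (g c) (Set.Ici xs) := by
  set m := (1 - c) / (1 + c) with hmdef
  have hd : (0 : ℝ) < 1 + c := by linarith
  have hm : 0 < m := div_pos (by linarith) hd
  have hderiv1 : ∀ x, deriv (g1 c) x
      = (1 + c) * Real.exp (-x * (1 + c)) * ((1 + c) * x - (1 - c)) :=
    fun x => (hasDerivAt_g1 c x).deriv
  have hderiv0 : ∀ x, deriv (g c) x = g1 c x := fun x => (hasDerivAt_g c x).deriv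
  have hanti : StrictAntiOn (g1 c) (Set.Icc 0 m) := by
    apply strictAntiOn_of_deriv_neg (convex_Icc 0 m) (continuous_g1 c).continuousOn
    intro x hx
    rw [interior_Icc] at hx
    rw [hderiv1]
    have h1 : x * (1 + c) < 1 - c := (lt_div_iff₀ hd).mp hx.2
    have h2 : (0 : ℝ) < Real.exp (-x * (1 + c)) := Real.exp_pos _
    exact mul_neg_of_pos_of_neg (mul_pos hd h2) (by linarith)
  have hmono1 : StrictMonoOn (g1 c) (Set.Ici m) := by
    apply strictMonoOn_of_deriv_pos (convex_Ici m) (continuous_g1 c).continuousOn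
    intro x hx
    rw [interior_Ici] at hx
    rw [hderiv1]
    have h1 : 1 - c < x * (1 + c) := (div_lt_iff₀ hd).mp hx
    have h2 : (0 : ℝ) < Real.exp (-x * (1 + c)) := Real.exp_pos _
    exact mul_pos (mul_pos hd h2) (by linarith)
  have hg10 : g1 c 0 = 0 := by simp [g1]
  have hg1m : g1 c m < 0 := by
    have := hanti (Set.mem_Icc.mpr ⟨le_rfl, hm.le⟩) (Set.mem_Icc.mpr ⟨hm.le, le_rfl⟩) hm
    linarith [hg10]
  -- `g1 c x → c` as `x → ∞`, so eventually positive
  have htend : Filter.Tendsto (fun x => Real.exp (-x * (1 + c)) * (c + (1 + c) * x))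
      Filter.atTop (nhds 0) := by
    have hcomp : Filter.Tendsto (fun x : ℝ => x * (1 + c)) Filter.atTop Filter.atTop :=
      Filter.tendsto_id.atTop_mul_const hd
    have hf : Filter.Tendsto (fun u : ℝ => Real.exp (-u) * (c + u)) Filter.atTop (nhds 0) := by
      have h1 := Real.tendsto_pow_mul_exp_neg_atTop_nhds_zero 1
      have h2 : Filter.Tendsto (fun u : ℝ => Real.exp (-u) * c) Filter.atTop (nhds 0) := by
        simpa using (Real.tendsto_exp_neg_atTop_nhds_zero).mul_const c
      have h3 := h2.add (by simpa [pow_one] using h1)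
      have h4 := h3.congr fun u => show Real.exp (-u) * c + u * Real.exp (-u)
        = Real.exp (-u) * (c + u) from by ring
      simpa using h4
    have h5 := hf.comp hcomp
    exact h5.congr fun x => by simp only [Function.comp_apply]; ring_nf
  obtain ⟨b, hbval, hbm⟩ :=
    ((htend.eventually_lt_const hc0).and (Filter.eventually_gt_atTop m)).exists
  have hgb : 0 < g1 c b := by unfold g1; linarith
  obtain ⟨xs, hxsmem, hxs⟩ := intermediate_value_Ioo hbm.le
    (continuous_g1 c).continuousOn (Set.mem_Ioo.mpr ⟨hg1m, hgb⟩)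
  have hxs0 : 0 < xs := hm.trans hxsmem.1
  have hsign_neg : ∀ t, 0 < t → t < xs → g1 c t < 0 := by
    intro t ht htx
    rcases le_or_gt t m with h | h
    · have := hanti (Set.mem_Icc.mpr ⟨le_rfl, hm.le⟩) (Set.mem_Icc.mpr ⟨ht.le, h⟩) ht
      linarith [hg10]
    · have := hmono1 h.le hxsmem.1.le htx
      rw [hxs] at this; exact this
  have hsign_pos : ∀ t, xs < t → 0 < g1 c t := by
    intro t ht
    have := hmono1 hxsmem.1.le (hxsmem.1.trans ht).le ht
    rw [hxs] at this; exact this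
  refine ⟨xs, hxs0, ?_, ?_⟩
  · have hganti : StrictAntiOn (g c) (Set.Icc 0 xs) := by
      apply strictAntiOn_of_deriv_neg (convex_Icc 0 xs) (continuous_g c).continuousOn
      intro x hx
      rw [interior_Icc] at hx
      rw [hderiv0]
      exact hsign_neg x hx.1 hx.2
    intro t ht htx
    have hg0 : g c 0 = 0 := by simp [g]
    have := hganti (Set.mem_Icc.mpr ⟨le_rfl, hxs0.le⟩) (Set.mem_Icc.mpr ⟨ht.le, htx⟩) ht
    linarith [hg0]
  · apply strictMonoOn_of_deriv_pos (convex_Ici xs) (continuous_g c).continuousOn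
    intro x hx
    rw [interior_Ici] at hx
    rw [hderiv0]
    exact hsign_pos x hx

/-- Sign of `g c` around any positive zero. -/
lemma sign_at_zero {c x₀ : ℝ} (hc0 : 0 < c) (hc1 : c < 1) (hx0 : 0 < x₀)
    (hz : g c x₀ = 0) :
    (∀ t, 0 < t → t < x₀ → g c t < 0) ∧ (∀ t, x₀ < t → 0 < g c t) := by
  obtain ⟨xs, hxs0, hneg, hmono⟩ := structure_lemma hc0 hc1
  have hx₀gt : xs < x₀ := by
    by_contra h
    push_neg at h
    have := hneg x₀ hx0 h
    linarith [hz]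
  constructor
  · intro t ht htx
    rcases le_or_gt t xs with h | h
    · exact hneg t ht h
    · have := hmono h.le hx₀gt.le htx
      rw [hz] at this; exact this
  · intro t ht
    have := hmono hx₀gt.le (hx₀gt.trans ht).le ht
    rw [hz] at this; exact this

lemma exists_zero {c : ℝ} (hc0 : 0 < c) (hc1 : c < 1) : ∃ x, 0 < x ∧ g c x = 0 := by
  obtain ⟨xs, hxs0, hneg, hmono⟩ := structure_lemma hc0 hc1
  have h1 : g c xs < 0 := hneg xs hxs0 le_rfl
  have hcinv : 0 < 1 / c := by positivity
  have h2 : 0 < g c (1 / c) := by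
    unfold g
    have h3 : c * (1 / c) = 1 := by field_simp
    rw [h3]
    have h4 := Real.exp_pos (-(1 / c) * (1 + c))
    nlinarith
  have hlt : xs < 1 / c := by
    by_contra h
    push_neg at h
    have := hneg (1 / c) hcinv h
    linarith
  obtain ⟨x, hxmem, hx⟩ := intermediate_value_Ioo hlt.le
    (continuous_g c).continuousOn (Set.mem_Ioo.mpr ⟨h1, h2⟩)
  exact ⟨x, hxs0.trans hxmem.1, hx⟩

theorem limit_comparable_angles (c : ℝ) (hc : c ∈ Set.Ioo (0 : ℝ) 1) :
    (∃! x : ℝ, 0 < x ∧ c * x - 1 + (x + 1) * Real.exp (-x * (1 + c)) = 0) ∧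
    ∀ x₀ : ℝ, 0 < x₀ → c * x₀ - 1 + (x₀ + 1) * Real.exp (-x₀ * (1 + c)) = 0 →
      x₀ < 1 / c ∧
      ∀ β₁ β₂ a : ℕ → ℝ, (∀ n, 0 < β₁ n ∧ β₁ n < β₂ n) →
        Filter.Tendsto (fun n => β₁ n / β₂ n) Filter.atTop (nhds c) →
        Filter.Tendsto β₂ Filter.atTop (nhds 0) →
        (∀ n, 0 < a n ∧ F (β₁ n) (β₂ n) (a n) = 0) →
        Filter.Tendsto (fun n => a n * β₂ n) Filter.atTop (nhds x₀) ∧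
        Filter.Tendsto (fun n => a n * β₁ n) Filter.atTop (nhds (c * x₀)) ∧
        c * x₀ ∈ Set.Ioo (0 : ℝ) 1 := by
  obtain ⟨hc0, hc1⟩ := hc
  have hgdef : ∀ x : ℝ, g c x = c * x - 1 + (x + 1) * Real.exp (-x * (1 + c)) := fun _ => rfl
  constructor
  · obtain ⟨x, hx0, hxz⟩ := exists_zero hc0 hc1
    refine ⟨x, ⟨hx0, hxz⟩, ?_⟩
    rintro y ⟨hy0, hyz⟩
    have hsign := sign_at_zero hc0 hc1 hx0 hxz
    rcases lt_trichotomy y x with h | h | h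
    · have := hsign.1 y hy0 h
      rw [hgdef] at this; linarith
    · exact h
    · have := hsign.2 y h
      rw [hgdef] at this; linarith
  · intro x₀ hx₀0 hx₀z
    have hgz : g c x₀ = 0 := hx₀z
    have hx₀lt : x₀ < 1 / c := by
      rw [lt_div_iff₀ hc0]
      have h4 := Real.exp_pos (-x₀ * (1 + c))
      nlinarith
    refine ⟨hx₀lt, ?_⟩
    intro β₁ β₂ a hβ hrat hβ2 ha
    have hβ2pos : ∀ n, 0 < β₂ n := fun n => (hβ n).1.trans (hβ n).2
    have hypos : ∀ n, 0 < a n * β₂ n := fun n => mul_pos (ha n).1 (hβ2pos n)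
    have key : ∀ n, g (β₁ n / β₂ n) (a n * β₂ n) = 0 := by
      intro n
      have hFz := (ha n).2
      unfold F at hFz
      unfold g
      have hb2 := (hβ2pos n).ne'
      have harg : -(a n * β₂ n) * (1 + β₁ n / β₂ n) = -a n * (β₁ n + β₂ n) := by
        field_simp
        ring
      rw [harg]
      have hc1' : β₁ n / β₂ n * (a n * β₂ n) = β₁ n * a n := by
        field_simp
      rw [hc1']
      rw [show a n * β₂ n + 1 = β₂ n * a n + 1 from by ring]
      exact hFz
    have hsign := sign_at_zero hc0 hc1 hx₀0 hgz
    have htendy : Filter.Tendsto (fun n => a n * β₂ n) Filter.atTop (nhds x₀) := by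
      rw [Metric.tendsto_nhds]
      intro ε hε
      set δ := min ε (x₀ / 2) with hδdef
      have hδ0 : 0 < δ := lt_min hε (by linarith)
      have hδx : δ ≤ x₀ / 2 := min_le_right _ _
      have hδε : δ ≤ ε := min_le_left _ _
      have h1 : g c (x₀ - δ) < 0 := hsign.1 _ (by linarith) (by linarith)
      have h2 : 0 < g c (x₀ + δ) := hsign.2 _ (by linarith)
      have hcg : ∀ t : ℝ, Continuous fun s : ℝ => g s t := by
        intro t; unfold g; continuity
      have e1 : ∀ᶠ n in Filter.atTop, g (β₁ n / β₂ n) (x₀ - δ) < 0 :=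
        Filter.Tendsto.eventually_lt_const h1 (((hcg (x₀ - δ)).tendsto c).comp hrat)
      have e2 : ∀ᶠ n in Filter.atTop, 0 < g (β₁ n / β₂ n) (x₀ + δ) :=
        Filter.Tendsto.eventually_const_lt h2 (((hcg (x₀ + δ)).tendsto c).comp hrat)
      have e3 : ∀ᶠ n in Filter.atTop, β₁ n / β₂ n ∈ Set.Ioo (0 : ℝ) 1 :=
        hrat.eventually (Ioo_mem_nhds hc0 hc1)
      filter_upwards [e1, e2, e3] with n hn1 hn2 hn3
      have hsn := sign_at_zero hn3.1 hn3.2 (hypos n) (key n)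
      have hgt : x₀ - δ < a n * β₂ n := by
        by_contra h
        push_neg at h
        rcases eq_or_lt_of_le h with h' | h'
        · rw [← h'] at hn1
          rw [key n] at hn1
          exact absurd hn1 (lt_irrefl 0)
        · have := hsn.2 _ h'
          linarith
      have hltb : a n * β₂ n < x₀ + δ := by
        by_contra h
        push_neg at h
        rcases eq_or_lt_of_le h with h' | h'
        · rw [h'] at hn2
          rw [key n] at hn2
          exact absurd hn2 (lt_irrefl 0)
        · have := hsn.1 _ (by linarith) h'
          linarith
      rw [Real.dist_eq, abs_lt]
      constructor <;> linarith
    refine ⟨htendy, ?_, ?_⟩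
    · have heq : ∀ n, a n * β₁ n = (a n * β₂ n) * (β₁ n / β₂ n) := by
        intro n
        have hb2 := (hβ2pos n).ne'
        field_simp
      have := htendy.mul hrat
      rw [mul_comm] at this
      exact this.congr fun n => (heq n).symm
    · refine ⟨mul_pos hc0 hx₀0, ?_⟩
      have h4 := Real.exp_pos (-x₀ * (1 + c))
      nlinarith
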